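/- Let k ≥ 1, let G = (V,E) be a finite simple graph, and let c : S → [k] be a partial coloring. Say two vertices u and v have the same type if N(u) ∖ {v} = N(v) ∖ {u}, where N(x) denotes the open neighborhood of x. Then there exists an extension c' of c to a full k-coloring of G that maximizes the number of happy edges over all extensions of c and that, in addition, satisfies c'(u) = c'(v) for all u, v ∈ V ∖ S having the same type. -/

import Mathlib

open Finset
open scoped Classical

/-- The number of happy edges of a graph `G` under a full coloring `c`. -/
noncomputable def happyEdgeCount {V : Type*} [Fintype V] {k : ℕ}
    (G : SimpleGraph V) (c : V → Fin k) : ℕ :=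
  (G.edgeFinset.filter (fun e => ∀ x ∈ e, ∀ y ∈ e, c x = c y)).card

section Aux

variable {V : Type*} [Fintype V] {k : ℕ}

/-- The number of ordered pairs `(a,b)` with `a ~ b` and `c a = c b`. -/
noncomputable def pairCount (G : SimpleGraph V) (c : V → Fin k) : ℕ :=
  ∑ a : V, ∑ b : V, if G.Adj a b ∧ c a = c b then 1 else 0

lemma two_mul_happy (G : SimpleGraph V) (c : V → Fin k) :
    2 * happyEdgeCount G c = pairCount G c := by
  classical
  let H : SimpleGraph V :=
    { Adj := fun a b => G.Adj a b ∧ c a = c b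
      symm := ⟨by rintro a b ⟨h1, h2⟩; exact ⟨h1.symm, h2.symm⟩⟩
      loopless := ⟨fun a h => G.loopless.irrefl a h.1⟩ }
  have hedge : happyEdgeCount G c = H.edgeFinset.card := by
    unfold happyEdgeCount
    congr 1
    ext e
    refine Sym2.ind (fun a b => ?_) e
    simp only [Finset.mem_filter, SimpleGraph.mem_edgeFinset, SimpleGraph.mem_edgeSet,
      Sym2.mem_iff]
    constructor
    · rintro ⟨hab, h⟩
      exact ⟨hab, h a (Or.inl rfl) b (Or.inr rfl)⟩
    · rintro ⟨hab, hcab⟩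
      refine ⟨hab, ?_⟩
      rintro x (rfl | rfl) y (rfl | rfl) <;> simp [hcab]
  have hdeg : pairCount G c = ∑ a : V, H.degree a := by
    unfold pairCount
    refine Finset.sum_congr rfl fun a _ => ?_
    rw [SimpleGraph.degree, SimpleGraph.neighborFinset_eq_filter, Finset.card_filter]
  rw [hedge, hdeg, SimpleGraph.sum_degrees_eq_twice_card_edges]

variable (G : SimpleGraph V) (S : Finset V)

/-- Two uncolored vertices of the same type. -/
def sameType (u v : V) : Prop :=
  u ∉ S ∧ v ∉ S ∧ G.neighborSet u \ {v} = G.neighborSet v \ {u}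

lemma sameType_symm {u v : V} (h : sameType G S u v) : sameType G S v u :=
  ⟨h.2.1, h.1, h.2.2.symm⟩

lemma sameType_adj {u v w : V} (h : sameType G S u v) (hwu : w ≠ u) (hwv : w ≠ v) :
    G.Adj u w ↔ G.Adj v w := by
  have := Set.ext_iff.mp h.2.2 w
  simp only [Set.mem_diff, SimpleGraph.mem_neighborSet, Set.mem_singleton_iff] at this
  constructor
  · intro ha; exact ((this.mp ⟨ha, hwv⟩).1)
  · intro ha; exact ((this.mpr ⟨ha, hwu⟩).1)

lemma eqv_notS : ∀ {u v : V}, Relation.EqvGen (sameType G S) u v →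
    u = v ∨ (u ∉ S ∧ v ∉ S) := by
  intro u v h
  induction h with
  | rel x y h => exact Or.inr ⟨h.1, h.2.1⟩
  | refl x => exact Or.inl rfl
  | symm x y h ih =>
      rcases ih with h' | h'
      · exact Or.inl h'.symm
      · exact Or.inr ⟨h'.2, h'.1⟩
  | trans x y z h1 h2 ih1 ih2 =>
      rcases ih1 with rfl | h1'
      · exact ih2
      · rcases ih2 with rfl | h2'
        · exact Or.inr h1'
        · exact Or.inr ⟨h1'.1, h2'.2⟩

lemma eqv_adj : ∀ {u v : V}, Relation.EqvGen (sameType G S) u v →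
    ∀ w : V, ¬ Relation.EqvGen (sameType G S) u w → (G.Adj w u ↔ G.Adj w v) := by
  intro u v h
  induction h with
  | rel x y hxy =>
      intro w hw
      have hwx : w ≠ x := by rintro rfl; exact hw (Relation.EqvGen.refl _)
      have hwy : w ≠ y := by rintro rfl; exact hw (Relation.EqvGen.rel _ _ hxy)
      rw [G.adj_comm w x, G.adj_comm w y]
      exact sameType_adj G S hxy hwx hwy
  | refl x => intro w _; rfl
  | symm x y h ih =>
      intro w hw
      have hxw : ¬ Relation.EqvGen (sameType G S) x w := by
        intro hc; exact hw (Relation.EqvGen.trans _ _ _ (Relation.EqvGen.symm _ _ h) hc)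
      exact (ih w hxw).symm
  | trans x y z h1 h2 ih1 ih2 =>
      intro w hw
      have hyw : ¬ Relation.EqvGen (sameType G S) y w := by
        intro hc; exact hw (Relation.EqvGen.trans _ _ _ h1 hc)
      exact (ih1 w hw).trans (ih2 w hyw)

lemma key (hk : 1 ≤ k) :
    ∀ n (c₀ : V → Fin k),
      ((univ : Finset (V × V)).filter
        (fun p => sameType G S p.1 p.2 ∧ c₀ p.1 ≠ c₀ p.2)).card ≤ n →
      ∃ c' : V → Fin k, (∀ v ∈ S, c' v = c₀ v) ∧ pairCount G c₀ ≤ pairCount G c' ∧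
        ∀ u v : V, sameType G S u v → c' u = c' v := by
  intro n
  induction n with
  | zero =>
      intro c₀ h
      refine ⟨c₀, fun v _ => rfl, le_refl _, ?_⟩
      intro u v huv
      by_contra hne
      have hmem : (u, v) ∈ (univ : Finset (V × V)).filter
          (fun p => sameType G S p.1 p.2 ∧ c₀ p.1 ≠ c₀ p.2) := by
        simp [huv, hne]
      have := Finset.card_pos.mpr ⟨_, hmem⟩
      omega
  | succ n ih =>
      intro c₀ hcard
      by_cases hb : ((univ : Finset (V × V)).filter
          (fun p => sameType G S p.1 p.2 ∧ c₀ p.1 ≠ c₀ p.2)).Nonempty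
      · obtain ⟨⟨u, v⟩, hmem⟩ := hb
        rw [Finset.mem_filter] at hmem
        obtain ⟨-, huv, hne⟩ := hmem
        set C : Finset V := univ.filter (fun x => Relation.EqvGen (sameType G S) u x)
          with hCdef
        have hmemC : ∀ x, x ∈ C ↔ Relation.EqvGen (sameType G S) u x := by
          intro x; simp [hCdef]
        have huC : u ∈ C := (hmemC u).mpr (Relation.EqvGen.refl u)
        have hvC : v ∈ C := (hmemC v).mpr (Relation.EqvGen.rel _ _ huv)
        have hCS : ∀ x ∈ C, x ∉ S := by
          intro x hx
          rcases eqv_notS G S ((hmemC x).mp hx) with rfl | h'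
          · exact huv.1
          · exact h'.2
        set A : Finset V := univ.filter (fun b => b ∉ C ∧ G.Adj u b) with hAdef
        obtain ⟨α, -, hα⟩ := Finset.exists_max_image (univ : Finset (Fin k))
          (fun β => (A.filter (fun b => c₀ b = β)).card) ⟨⟨0, hk⟩, mem_univ _⟩
        set c₁ : V → Fin k := fun x => if x ∈ C then α else c₀ x with hc₁
        have hc₁C : ∀ x ∈ C, c₁ x = α := by intro x hx; simp [hc₁, hx]
        have hc₁nC : ∀ x, x ∉ C → c₁ x = c₀ x := by intro x hx; simp [hc₁, hx]
        -- the bad set strictly decreases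
        have hsub : ((univ : Finset (V × V)).filter
            (fun p => sameType G S p.1 p.2 ∧ c₁ p.1 ≠ c₁ p.2)) ⊆
            (((univ : Finset (V × V)).filter
            (fun p => sameType G S p.1 p.2 ∧ c₀ p.1 ≠ c₀ p.2)).erase (u, v)) := by
          intro p hp
          rw [Finset.mem_filter] at hp
          obtain ⟨-, hst, hnep⟩ := hp
          have hp1 : p.1 ∉ C := by
            intro h1
            have h2 : p.2 ∈ C := (hmemC p.2).mpr
              (Relation.EqvGen.trans _ _ _ ((hmemC p.1).mp h1)
                (Relation.EqvGen.rel _ _ hst))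
            exact hnep ((hc₁C _ h1).trans (hc₁C _ h2).symm)
          have hp2 : p.2 ∉ C := by
            intro h2
            exact hp1 ((hmemC p.1).mpr
              (Relation.EqvGen.trans _ _ _ ((hmemC p.2).mp h2)
                (Relation.EqvGen.rel _ _ (sameType_symm G S hst))))
          rw [Finset.mem_erase, Finset.mem_filter]
          refine ⟨?_, mem_univ _, hst, ?_⟩
          · intro hpe
            rw [hpe] at hp1
            exact hp1 huC
          · rwa [hc₁nC _ hp1, hc₁nC _ hp2] at hnep
        have hcard1 : ((univ : Finset (V × V)).filter
            (fun p => sameType G S p.1 p.2 ∧ c₁ p.1 ≠ c₁ p.2)).card ≤ n := by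
          have h1 := Finset.card_le_card hsub
          have h2 : (u, v) ∈ ((univ : Finset (V × V)).filter
              (fun p => sameType G S p.1 p.2 ∧ c₀ p.1 ≠ c₀ p.2)) := by
            simp [huv, hne]
          rw [Finset.card_erase_of_mem h2] at h1
          have := Finset.card_pos.mpr ⟨_, h2⟩
          omega
        -- the pair count does not decrease
        have hpair : pairCount G c₀ ≤ pairCount G c₁ := by
          have hsplit : ∀ c : V → Fin k, pairCount G c =
              ((∑ a ∈ C, ∑ b ∈ C, if G.Adj a b ∧ c a = c b then 1 else 0) +
               ∑ a ∈ C, ∑ b ∈ Cᶜ, if G.Adj a b ∧ c a = c b then 1 else 0) +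
              ((∑ a ∈ Cᶜ, ∑ b ∈ C, if G.Adj a b ∧ c a = c b then 1 else 0) +
               ∑ a ∈ Cᶜ, ∑ b ∈ Cᶜ, if G.Adj a b ∧ c a = c b then 1 else 0) := by
            intro c
            unfold pairCount
            rw [← Finset.sum_add_sum_compl C]
            congr 1 <;>
            · rw [← Finset.sum_add_distrib]
              exact Finset.sum_congr rfl fun a _ => (Finset.sum_add_sum_compl C _).symm
          have hT1 : (∑ a ∈ C, ∑ b ∈ C, if G.Adj a b ∧ c₀ a = c₀ b then 1 else 0) ≤
              ∑ a ∈ C, ∑ b ∈ C, if G.Adj a b ∧ c₁ a = c₁ b then 1 else 0 := by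
            refine Finset.sum_le_sum fun a ha => Finset.sum_le_sum fun b hb => ?_
            by_cases h : G.Adj a b ∧ c₀ a = c₀ b
            · rw [if_pos h, if_pos ⟨h.1, (hc₁C a ha).trans (hc₁C b hb).symm⟩]
            · rw [if_neg h]; exact Nat.zero_le _
          have hmod : ∀ a ∈ C, ∀ b ∈ Cᶜ, (G.Adj a b ↔ G.Adj u b) := by
            intro a ha b hb
            rw [Finset.mem_compl] at hb
            have h1 := eqv_adj G S ((hmemC a).mp ha) b (fun hc => hb ((hmemC b).mpr hc))
            rw [G.adj_comm a b, G.adj_comm u b]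
            exact h1.symm
          have hCc : Cᶜ = univ.filter (fun b => b ∉ C) := by ext b; simp
          have hinner : ∀ (c : V → Fin k) (a : V), a ∈ C →
              (∑ b ∈ Cᶜ, if G.Adj a b ∧ c a = c b then 1 else 0) =
              (A.filter (fun b => c b = c a)).card := by
            intro c a ha
            rw [hCc, Finset.sum_filter, hAdef, Finset.filter_filter, Finset.card_filter]
            refine Finset.sum_congr rfl fun b _ => ?_
            by_cases hbC : b ∈ C
            · simp [hbC]
            · rw [if_pos hbC]
              have hmb := hmod a ha b (Finset.mem_compl.mpr hbC)
              by_cases h2 : G.Adj a b ∧ c a = c b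
              · rw [if_pos h2, if_pos ⟨⟨hbC, hmb.mp h2.1⟩, h2.2.symm⟩]
              · rw [if_neg h2, if_neg]
                rintro ⟨⟨-, hadj⟩, hcb⟩
                exact h2 ⟨hmb.mpr hadj, hcb.symm⟩
          have hT2 : (∑ a ∈ C, ∑ b ∈ Cᶜ, if G.Adj a b ∧ c₀ a = c₀ b then 1 else 0) ≤
              ∑ a ∈ C, ∑ b ∈ Cᶜ, if G.Adj a b ∧ c₁ a = c₁ b then 1 else 0 := by
            refine Finset.sum_le_sum fun a ha => ?_
            rw [hinner c₀ a ha, hinner c₁ a ha]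
            have h1 : A.filter (fun b => c₁ b = c₁ a) = A.filter (fun b => c₀ b = α) := by
              refine Finset.filter_congr fun b hb => ?_
              have hbA : b ∉ C := by
                rw [hAdef, Finset.mem_filter] at hb
                exact hb.2.1
              rw [hc₁nC b hbA, hc₁C a ha]
            rw [h1]
            exact hα (c₀ a) (mem_univ _)
          have hswap : ∀ c : V → Fin k,
              (∑ a ∈ Cᶜ, ∑ b ∈ C, if G.Adj a b ∧ c a = c b then 1 else 0) =
              ∑ a ∈ C, ∑ b ∈ Cᶜ, if G.Adj a b ∧ c a = c b then 1 else 0 := by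
            intro c
            rw [Finset.sum_comm]
            refine Finset.sum_congr rfl fun a _ => Finset.sum_congr rfl fun b _ => ?_
            exact if_congr ⟨fun ⟨h1, h2⟩ => ⟨h1.symm, h2.symm⟩,
              fun ⟨h1, h2⟩ => ⟨h1.symm, h2.symm⟩⟩ rfl rfl
          have hT4 : (∑ a ∈ Cᶜ, ∑ b ∈ Cᶜ, if G.Adj a b ∧ c₀ a = c₀ b then 1 else 0) =
              ∑ a ∈ Cᶜ, ∑ b ∈ Cᶜ, if G.Adj a b ∧ c₁ a = c₁ b then 1 else 0 := by
            refine Finset.sum_congr rfl fun a ha => Finset.sum_congr rfl fun b hb => ?_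
            rw [hc₁nC a (Finset.mem_compl.mp ha), hc₁nC b (Finset.mem_compl.mp hb)]
          rw [hsplit c₀, hsplit c₁, hswap c₀, hswap c₁, hT4]
          omega
        obtain ⟨c', hS', hle', hsame'⟩ := ih c₁ hcard1
        refine ⟨c', ?_, le_trans hpair hle', hsame'⟩
        intro x hx
        rw [hS' x hx, hc₁nC x (fun hxC => hCS x hxC hx)]
      · refine ih c₀ ?_
        rw [Finset.not_nonempty_iff_eq_empty] at hb
        simp [hb]

end Aux

/-- For any partial coloring `c : S → [k]` of a graph `G` there is an
extension `c'` of `c` maximizing the number of happy edges over all extensions such that,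
moreover, any two uncolored vertices of the same type (`N(u) ∖ {v} = N(v) ∖ {u}`) receive the
same color under `c'`. -/
theorem stmt12 {V : Type*} [Fintype V] (k : ℕ) (hk : 1 ≤ k)
    (G : SimpleGraph V) (S : Finset V) (c : V → Fin k) :
    ∃ c' : V → Fin k, (∀ v ∈ S, c' v = c v) ∧
      (∀ c'' : V → Fin k, (∀ v ∈ S, c'' v = c v) →
        happyEdgeCount G c'' ≤ happyEdgeCount G c') ∧
      ∀ u v : V, u ∉ S → v ∉ S →
        G.neighborSet u \ {v} = G.neighborSet v \ {u} → c' u = c' v := by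
  classical
  obtain ⟨c₀, hc₀mem, hc₀max⟩ := Finset.exists_max_image
    ((univ : Finset (V → Fin k)).filter (fun f => ∀ v ∈ S, f v = c v))
    (happyEdgeCount G) ⟨c, by simp⟩
  rw [Finset.mem_filter] at hc₀mem
  obtain ⟨c', hS, hle, hsame⟩ := key G S hk _ c₀ le_rfl
  refine ⟨c', fun v hv => (hS v hv).trans (hc₀mem.2 v hv), ?_, ?_⟩
  · intro c'' h''
    have h1 : happyEdgeCount G c'' ≤ happyEdgeCount G c₀ := by
      refine hc₀max c'' ?_
      simp only [Finset.mem_filter, Finset.mem_univ, true_and]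
      exact h''
    have h2 : happyEdgeCount G c₀ ≤ happyEdgeCount G c' := by
      have e1 := two_mul_happy G c₀
      have e2 := two_mul_happy G c'
      omega
    exact le_trans h1 h2
  · intro x y hx hy hset
    exact hsame x y ⟨hx, hy, hset⟩
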